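/- For every p ∈ [1/2, 1) and every η > 0, Φ(Φ⁻¹(p) + η) ≥ 1 - (1-p)·√(π/2)·e^{-η²/2}·e^{-η·Φ⁻¹(p)}. -/
import Mathlib


open Real Set

/-- The standard normal cumulative distribution function. -/
noncomputable def Phi (x : ℝ) : ℝ :=
  (Real.sqrt (2 * π))⁻¹ * ∫ u in Set.Iic x, Real.exp (-u ^ 2 / 2)

/-- The inverse of the standard normal cdf. -/
noncomputable def PhiInv : ℝ → ℝ := Function.invFun Phi

open MeasureTheory

lemma gauss_int : Integrable (fun u : ℝ => Real.exp (-u ^ 2 / 2)) := by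
  have := integrable_exp_neg_mul_sq (b := (1/2:ℝ)) one_half_pos
  refine this.congr ?_
  filter_upwards with x
  ring_nf

lemma gauss_total : ∫ u : ℝ, Real.exp (-u ^ 2 / 2) = Real.sqrt (2 * π) := by
  have := integral_gaussian (1/2)
  rw [show π / (1/2:ℝ) = 2 * π by ring] at this
  rw [← this]
  congr 1 with x
  ring_nf

lemma gauss_pos (u : ℝ) : 0 < Real.exp (-u ^ 2 / 2) := Real.exp_pos _

lemma Phi_strictMono : StrictMono Phi := by
  intro a b hab
  have h1 : (0:ℝ) < Real.sqrt (2 * π) := Real.sqrt_pos.2 (by positivity)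
  have key : (∫ u in Set.Iic a, Real.exp (-u ^ 2 / 2)) < ∫ u in Set.Iic b, Real.exp (-u ^ 2 / 2) := by
    have hdiff : (∫ u in Set.Iic b, Real.exp (-u ^ 2 / 2)) - ∫ u in Set.Iic a, Real.exp (-u ^ 2 / 2)
        = ∫ u in a..b, Real.exp (-u ^ 2 / 2) :=
      intervalIntegral.integral_Iic_sub_Iic gauss_int.integrableOn gauss_int.integrableOn
    have hpos : 0 < ∫ u in a..b, Real.exp (-u ^ 2 / 2) :=
      intervalIntegral.intervalIntegral_pos_of_pos (gauss_int.intervalIntegrable)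
        (fun x => gauss_pos x) hab
    linarith
  exact mul_lt_mul_of_pos_left key (inv_pos.2 h1)

lemma Iic_zero_eq : (∫ u in Set.Iic (0:ℝ), Real.exp (-u ^ 2 / 2)) = Real.sqrt (2 * π) / 2 := by
  have hsym : (∫ u in Set.Iic (0:ℝ), Real.exp (-u ^ 2 / 2))
      = ∫ u in Set.Ioi (0:ℝ), Real.exp (-u ^ 2 / 2) := by
    have := integral_comp_neg_Iic 0 (fun u => Real.exp (-u ^ 2 / 2))
    simpa using this
  have htot := intervalIntegral.integral_Iic_add_Ioi (b := (0:ℝ))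
      gauss_int.integrableOn gauss_int.integrableOn
  rw [gauss_total] at htot
  linarith [hsym, htot]

lemma Phi_zero : Phi 0 = 1 / 2 := by
  have h1 : (0:ℝ) < Real.sqrt (2 * π) := Real.sqrt_pos.2 (by positivity)
  rw [Phi, Iic_zero_eq]
  field_simp

lemma Phi_continuous : Continuous Phi := by
  have h : Continuous fun x : ℝ => ∫ u in Set.Iic x, Real.exp (-u ^ 2 / 2) := by
    have hfun : (fun x : ℝ => ∫ u in Set.Iic x, Real.exp (-u ^ 2 / 2))
        = fun x => (∫ u in Set.Iic 0, Real.exp (-u ^ 2 / 2)) + ∫ u in (0:ℝ)..x, Real.exp (-u ^ 2 / 2) := by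
      funext x
      have := intervalIntegral.integral_Iic_sub_Iic (a := (0:ℝ)) (b := x)
        gauss_int.integrableOn gauss_int.integrableOn
      linarith
    rw [hfun]
    exact continuous_const.add (gauss_int.continuous_primitive 0)
  exact continuous_const.mul h

lemma Phi_tendsto_atTop : Filter.Tendsto Phi Filter.atTop (nhds 1) := by
  have h : Filter.Tendsto (fun x : ℝ => ∫ u in Set.Iic x, Real.exp (-u ^ 2 / 2))
      Filter.atTop (nhds (Real.sqrt (2 * π))) := by
    have h2 : Filter.Tendsto (fun x : ℝ => ∫ u in (0:ℝ)..x, Real.exp (-u ^ 2 / 2))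
        Filter.atTop (nhds (∫ u in Set.Ioi (0:ℝ), Real.exp (-u ^ 2 / 2))) :=
      MeasureTheory.intervalIntegral_tendsto_integral_Ioi 0 gauss_int.integrableOn Filter.tendsto_id
    have heq : (fun x : ℝ => ∫ u in Set.Iic x, Real.exp (-u ^ 2 / 2))
        = fun x => (∫ u in Set.Iic 0, Real.exp (-u ^ 2 / 2)) + ∫ u in (0:ℝ)..x, Real.exp (-u ^ 2 / 2) := by
      funext x
      have := intervalIntegral.integral_Iic_sub_Iic (a := (0:ℝ)) (b := x)
        gauss_int.integrableOn gauss_int.integrableOn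
      linarith
    have htot := intervalIntegral.integral_Iic_add_Ioi (b := (0:ℝ))
        gauss_int.integrableOn gauss_int.integrableOn
    rw [gauss_total] at htot
    rw [heq]
    have := (tendsto_const_nhds (x := (∫ u in Set.Iic (0:ℝ), Real.exp (-u ^ 2 / 2)))
        (f := Filter.atTop (α := ℝ))).add h2
    rwa [htot] at this
  have h1 : (0:ℝ) < Real.sqrt (2 * π) := Real.sqrt_pos.2 (by positivity)
  have := h.const_mul (Real.sqrt (2 * π))⁻¹
  rwa [inv_mul_cancel₀ h1.ne'] at this

lemma PhiInv_spec {p : ℝ} (hp : p ∈ Set.Ico (1 / 2 : ℝ) 1) :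
    Phi (PhiInv p) = p ∧ 0 ≤ PhiInv p := by
  obtain ⟨hp1, hp2⟩ := hp
  obtain ⟨M, hM⟩ : ∃ M : ℝ, p < Phi M := by
    exact (Phi_tendsto_atTop.eventually (eventually_gt_nhds hp2)).exists
  have hM0 : (0:ℝ) ≤ M := by
    by_contra h
    have := Phi_strictMono (lt_of_not_ge h)
    rw [Phi_zero] at this
    linarith
  obtain ⟨x, -, hxp⟩ : ∃ x ∈ Set.Icc (0:ℝ) M, Phi x = p := by
    have := intermediate_value_Icc hM0 Phi_continuous.continuousOn
    exact this ⟨by rw [Phi_zero]; exact hp1, le_of_lt hM⟩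
  have hinv : Phi (PhiInv p) = p := Function.invFun_eq ⟨x, hxp⟩
  refine ⟨hinv, ?_⟩
  by_contra h
  have := Phi_strictMono (lt_of_not_ge h)
  rw [Phi_zero, hinv] at this
  linarith

lemma shift_int (η : ℝ) : MeasureTheory.Integrable (fun u : ℝ => Real.exp (-(u + η) ^ 2 / 2)) := by
  have h := (MeasureTheory.measurePreserving_add_right (MeasureTheory.volume : MeasureTheory.Measure ℝ) η).integrable_comp
      gauss_int.aestronglyMeasurable
  exact h.mpr gauss_int

lemma shift_eq (x η : ℝ) :
    (∫ u in Set.Ioi (x + η), Real.exp (-u ^ 2 / 2))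
      = ∫ u in Set.Ioi x, Real.exp (-(u + η) ^ 2 / 2) := by
  rw [← MeasureTheory.integral_indicator measurableSet_Ioi,
      ← MeasureTheory.integral_indicator measurableSet_Ioi,
      ← MeasureTheory.integral_add_right_eq_self
        ((Set.Ioi (x + η)).indicator fun u => Real.exp (-u ^ 2 / 2)) η]
  congr 1
  funext u
  by_cases h : x < u
  · simp [Set.indicator_apply, Set.mem_Ioi, h, add_lt_add_iff_right]
  · simp [Set.indicator_apply, Set.mem_Ioi, h, add_lt_add_iff_right]

lemma tail_bound {x : ℝ} (_hx : 0 ≤ x) {η : ℝ} (hη : 0 < η) :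
    (∫ u in Set.Ioi (x + η), Real.exp (-u ^ 2 / 2))
      ≤ Real.exp (-η ^ 2 / 2) * Real.exp (-η * x) * ∫ u in Set.Ioi x, Real.exp (-u ^ 2 / 2) := by
  rw [shift_eq, ← MeasureTheory.integral_const_mul]
  apply MeasureTheory.setIntegral_mono_on (shift_int η).integrableOn
    ((gauss_int.const_mul _).integrableOn) measurableSet_Ioi
  intro u hu
  rw [Set.mem_Ioi] at hu
  rw [← Real.exp_add, ← Real.exp_add, Real.exp_le_exp]
  nlinarith

theorem phi_shift_lower_bound (p : ℝ) (hp : p ∈ Set.Ico (1 / 2 : ℝ) 1)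
    (η : ℝ) (hη : 0 < η) :
    Phi (PhiInv p + η) ≥
      1 - (1 - p) * Real.sqrt (π / 2) * Real.exp (-η ^ 2 / 2) *
        Real.exp (-η * PhiInv p) := by
  obtain ⟨hPhi, hx0⟩ := PhiInv_spec hp
  set x := PhiInv p with hxdef
  have h1 : (0:ℝ) < Real.sqrt (2 * π) := Real.sqrt_pos.2 (by positivity)
  -- 1 - Phi t = c * ∫ Ioi t
  have hcompl : ∀ t : ℝ, 1 - Phi t = (Real.sqrt (2 * π))⁻¹ * ∫ u in Set.Ioi t, Real.exp (-u ^ 2 / 2) := by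
    intro t
    have htot := intervalIntegral.integral_Iic_add_Ioi (b := t) (μ := MeasureTheory.volume)
        gauss_int.integrableOn gauss_int.integrableOn
    rw [gauss_total] at htot
    have hone : (Real.sqrt (2 * π))⁻¹ * ((∫ u in Set.Iic t, Real.exp (-u ^ 2 / 2))
        + ∫ u in Set.Ioi t, Real.exp (-u ^ 2 / 2)) = 1 := by
      rw [htot]; exact inv_mul_cancel₀ h1.ne'
    rw [mul_add] at hone
    rw [Phi]
    linarith
  have hineq : 1 - Phi (x + η) ≤ Real.exp (-η ^ 2 / 2) * Real.exp (-η * x) * (1 - p) := by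
    rw [hcompl, ← hPhi, hcompl]
    calc (Real.sqrt (2 * π))⁻¹ * ∫ u in Set.Ioi (x + η), Real.exp (-u ^ 2 / 2)
        ≤ (Real.sqrt (2 * π))⁻¹ *
            (Real.exp (-η ^ 2 / 2) * Real.exp (-η * x) * ∫ u in Set.Ioi x, Real.exp (-u ^ 2 / 2)) := by
          exact mul_le_mul_of_nonneg_left (tail_bound hx0 hη) (by positivity)
      _ = Real.exp (-η ^ 2 / 2) * Real.exp (-η * x) *
            ((Real.sqrt (2 * π))⁻¹ * ∫ u in Set.Ioi x, Real.exp (-u ^ 2 / 2)) := by ring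
  have hsq : (1:ℝ) ≤ Real.sqrt (π / 2) := by
    rw [show (1:ℝ) = Real.sqrt 1 by simp]
    apply Real.sqrt_le_sqrt
    nlinarith [Real.pi_gt_three]
  have hp1 : 0 ≤ 1 - p := by linarith [hp.2]
  have hfinal : Real.exp (-η ^ 2 / 2) * Real.exp (-η * x) * (1 - p)
      ≤ (1 - p) * Real.sqrt (π / 2) * Real.exp (-η ^ 2 / 2) * Real.exp (-η * x) := by
    have h2 : (0:ℝ) ≤ Real.exp (-η ^ 2 / 2) * Real.exp (-η * x) := by positivity
    nlinarith [mul_le_mul_of_nonneg_left hsq (mul_nonneg hp1 h2)]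
  linarith
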